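/- For each i ∈ ℕ, let (X_i, d_i) be a metric space with a Borel measure μ_i and a base point p_i ∈ X_i, such that every open ball in every X_i has positive finite measure, and suppose there is a function C : (0, ∞) → [1, ∞) with μ_i(B_{2r}(x)) ≤ C(R) · μ_i(B_r(x)) for all i ∈ ℕ, all x ∈ X_i, all R > 0 and all 0 < r ≤ R. Let U_i ⊆ X_i be Borel sets. Then the following are equivalent: (1) for every R > 0, μ_i(U_i ∩ B_R(p_i)) / μ_i(B_R(p_i)) → 1 as i → ∞; (2) for all real numbers R > δ > 0, there is a sequence ε_i → 0 such that for every i and every x ∈ B_R(p_i), μ_i(U_i ∩ B_δ(x)) ≥ (1 − ε_i) · μ_i(B_δ(x)). -/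

import Mathlib

open MeasureTheory Metric Filter Topology ENNReal NNReal

/-- **Corollary (a-full-measure).**
For a sequence of pointed metric measure spaces with a uniform local doubling
condition, a sequence of Borel sets `Uᵢ ⊆ Xᵢ` has asymptotically full measure
around the base points iff it has asymptotically full measure uniformly at every
fixed small scale. -/
theorem asymptotically_full_measure_iff
    (X : ℕ → Type) [∀ i, MetricSpace (X i)] [∀ i, MeasurableSpace (X i)]
    [∀ i, BorelSpace (X i)] (μ : ∀ i, Measure (X i)) (p : ∀ i, X i)
    (hpos : ∀ i (x : X i) (r : ℝ), 0 < r →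
      0 < μ i (ball x r) ∧ μ i (ball x r) < ⊤)
    (C : ℝ → ℝ≥0∞) (hC : ∀ R : ℝ, 0 < R → 1 ≤ C R ∧ C R ≠ ⊤)
    (hdoub : ∀ R : ℝ, 0 < R → ∀ i (x : X i) (r : ℝ), 0 < r → r ≤ R →
      μ i (ball x (2 * r)) ≤ C R * μ i (ball x r))
    (U : ∀ i, Set (X i)) (hU : ∀ i, MeasurableSet (U i)) :
    (∀ R : ℝ, 0 < R →
        Tendsto (fun i => μ i (U i ∩ ball (p i) R) / μ i (ball (p i) R))
          atTop (𝓝 1)) ↔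
      (∀ R δ : ℝ, 0 < δ → δ < R →
        ∃ ε : ℕ → ℝ, Tendsto ε atTop (𝓝 0) ∧
          ∀ i, ∀ x ∈ ball (p i) R,
            (1 - ENNReal.ofReal (ε i)) * μ i (ball x δ) ≤
              μ i (U i ∩ ball x δ)) := by
  constructor
  · -- hard direction
    intro h R δ hδ hδR
    have hR : 0 < R := hδ.trans hδR
    -- choose number of doublings
    obtain ⟨k, hk⟩ := pow_unbounded_of_one_lt ((2 * R + δ) / δ) (by norm_num : (1:ℝ) < 2)
    set R₀ : ℝ := δ * 2 ^ k with hR₀def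
    have h2k : (0:ℝ) < 2 ^ k := by positivity
    have hR₀pos : 0 < R₀ := by positivity
    have hR₀big : 2 * R + δ ≤ R₀ := by
      rw [hR₀def]
      have := (div_lt_iff₀ hδ).mp hk
      nlinarith
    obtain ⟨hC1, hCtop⟩ := hC R₀ hR₀pos
    set K : ℝ≥0∞ := (C R₀) ^ k with hKdef
    have hKtop : K ≠ ⊤ := ENNReal.pow_ne_top hCtop
    -- doubling iterate
    have hiter : ∀ i (x : X i) (j : ℕ), δ * 2 ^ j ≤ R₀ →
        μ i (ball x (δ * 2 ^ j)) ≤ (C R₀) ^ j * μ i (ball x δ) := by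
      intro i x j
      induction j with
      | zero => intro _; simp
      | succ j ih =>
        intro hj
        have hj' : δ * 2 ^ j ≤ R₀ := by
          have : δ * 2 ^ j ≤ δ * 2 ^ (j+1) := by
            apply mul_le_mul_of_nonneg_left _ hδ.le
            exact pow_le_pow_right₀ (by norm_num) (Nat.le_succ j)
          linarith
        have hrpos : 0 < δ * 2 ^ j := by positivity
        have h1 : μ i (ball x (δ * 2 ^ (j+1))) ≤ C R₀ * μ i (ball x (δ * 2 ^ j)) := by
          have : δ * 2 ^ (j+1) = 2 * (δ * 2 ^ j) := by ring
          rw [this]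
          exact hdoub R₀ hR₀pos i x (δ * 2 ^ j) hrpos hj'
        calc μ i (ball x (δ * 2 ^ (j+1))) ≤ C R₀ * μ i (ball x (δ * 2 ^ j)) := h1
          _ ≤ C R₀ * ((C R₀) ^ j * μ i (ball x δ)) :=
              mul_le_mul_right (ih hj') _
          _ = (C R₀) ^ (j+1) * μ i (ball x δ) := by ring
    -- key comparison
    have hkey : ∀ i (x : X i), x ∈ ball (p i) R →
        μ i (ball (p i) (R + δ)) ≤ K * μ i (ball x δ) := by
      intro i x hx
      have hsub : ball (p i) (R + δ) ⊆ ball x R₀ := by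
        intro y hy
        rw [mem_ball] at *
        have hxp : dist x (p i) < R := hx
        have : dist y x ≤ dist y (p i) + dist (p i) x := dist_triangle _ _ _
        rw [dist_comm (p i) x] at this
        have : dist y x < 2 * R + δ := by linarith
        linarith [hR₀big]
      calc μ i (ball (p i) (R + δ)) ≤ μ i (ball x R₀) := measure_mono hsub
        _ = μ i (ball x (δ * 2 ^ k)) := by rw [hR₀def]
        _ ≤ K * μ i (ball x δ) := hiter i x k (le_of_eq hR₀def.symm)
    set m : ℕ → ℝ≥0∞ := fun i => μ i (ball (p i) (R + δ)) with hmdef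
    set u : ℕ → ℝ≥0∞ := fun i => μ i (U i ∩ ball (p i) (R + δ)) with hudef
    have hmpos : ∀ i, m i ≠ 0 := fun i => ((hpos i (p i) (R + δ) (by linarith)).1).ne'
    have hmtop : ∀ i, m i ≠ ⊤ := fun i => ((hpos i (p i) (R + δ) (by linarith)).2).ne
    have hum : ∀ i, u i ≤ m i := fun i => measure_mono Set.inter_subset_right
    set e : ℕ → ℝ≥0∞ := fun i => K * (1 - u i / m i) with hedef
    have hetop : ∀ i, e i ≠ ⊤ := by
      intro i
      apply ENNReal.mul_ne_top hKtop
      exact (tsub_le_self.trans_lt (by norm_num : (1:ℝ≥0∞) < ⊤)).ne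
    refine ⟨fun i => (e i).toReal, ?_, ?_⟩
    · -- tendsto 0
      have h1 := h (R + δ) (by linarith)
      have h2 : Tendsto (fun i => (1:ℝ≥0∞) - u i / m i) atTop (𝓝 0) := by
        have := ENNReal.Tendsto.sub (tendsto_const_nhds (x := (1:ℝ≥0∞))) h1
          (Or.inl one_ne_top)
        simpa using this
      have h3 : Tendsto e atTop (𝓝 0) := by
        have := ENNReal.Tendsto.const_mul (a := K) h2 (Or.inr hKtop)
        simpa [hedef] using this
      have h4 := (ENNReal.tendsto_toReal (a := 0) (by simp)).comp h3
      simpa [Function.comp_def] using h4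
    · intro i x hx
      have hbpos := hpos i x δ hδ
      have hofr : ENNReal.ofReal ((e i).toReal) = e i := ENNReal.ofReal_toReal (hetop i)
      rw [hofr, ENNReal.sub_mul (fun _ _ => (hbpos.2).ne), tsub_le_iff_right, one_mul]
      -- μ (ball x δ) ≤ μ (U ∩ ball x δ) + e i * μ (ball x δ)
      have hsplit : μ i (ball x δ) = μ i (U i ∩ ball x δ) + μ i (ball x δ \ U i) := by
        rw [Set.inter_comm]
        exact (measure_inter_add_diff _ (hU i)).symm
      have hdiff : μ i (ball x δ \ U i) ≤ m i - u i := by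
        have hsub2 : ball x δ ⊆ ball (p i) (R + δ) := by
          intro y hy
          rw [mem_ball] at *
          have := dist_triangle y x (p i)
          linarith [hx]
        calc μ i (ball x δ \ U i) ≤ μ i (ball (p i) (R + δ) \ U i) :=
              measure_mono (Set.diff_subset_diff_left hsub2)
          _ = m i - u i := by
              have h5 := measure_inter_add_diff (μ := μ i) (ball (p i) (R + δ)) (hU i)
              rw [Set.inter_comm, add_comm] at h5
              exact ENNReal.eq_sub_of_add_eq
                (fun ht => hmtop i (top_le_iff.mp (ht ▸ hum i))) h5
      have hutop : u i ≠ ⊤ := fun ht => hmtop i (top_le_iff.mp (ht ▸ hum i))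
      have h6 : m i - u i = (1 - u i / m i) * m i := by
        rw [ENNReal.sub_mul (fun _ _ => hmtop i), one_mul,
          ENNReal.div_mul_cancel (hmpos i) (hmtop i)]
      have h7 : μ i (ball x δ \ U i) ≤ e i * μ i (ball x δ) := by
        calc μ i (ball x δ \ U i) ≤ m i - u i := hdiff
          _ = (1 - u i / m i) * m i := h6
          _ ≤ (1 - u i / m i) * (K * μ i (ball x δ)) :=
              mul_le_mul_right (hkey i x hx) _
          _ = e i * μ i (ball x δ) := by rw [hedef]; ring
      calc μ i (ball x δ) = μ i (U i ∩ ball x δ) + μ i (ball x δ \ U i) := hsplit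
        _ ≤ μ i (U i ∩ ball x δ) + e i * μ i (ball x δ) := add_le_add_right h7 _
  · -- easy direction
    intro h2 R hR
    obtain ⟨ε, hε0, hεbd⟩ := h2 (R + 1) R hR (by linarith)
    have hmem : ∀ i, p i ∈ ball (p i) (R + 1) := fun i => by
      simp [mem_ball]; linarith
    have hb := fun i => hpos i (p i) R hR
    have hlow : ∀ i, (1 : ℝ≥0∞) - ENNReal.ofReal (ε i) ≤
        μ i (U i ∩ ball (p i) R) / μ i (ball (p i) R) := by
      intro i
      rw [ENNReal.le_div_iff_mul_le (Or.inl (hb i).1.ne') (Or.inl (hb i).2.ne)]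
      exact hεbd i (p i) (hmem i)
    have hup : ∀ i, μ i (U i ∩ ball (p i) R) / μ i (ball (p i) R) ≤ 1 := by
      intro i
      exact ENNReal.div_le_of_le_mul (by simpa using measure_mono Set.inter_subset_right)
    have hlowt : Tendsto (fun i => (1:ℝ≥0∞) - ENNReal.ofReal (ε i)) atTop (𝓝 1) := by
      have h1 : Tendsto (fun i => ENNReal.ofReal (ε i)) atTop (𝓝 0) := by
        simpa using ENNReal.tendsto_ofReal hε0
      have := ENNReal.Tendsto.sub (tendsto_const_nhds (x := (1:ℝ≥0∞))) h1
        (Or.inl one_ne_top)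
      simpa using this
    exact tendsto_of_tendsto_of_tendsto_of_le_of_le hlowt tendsto_const_nhds hlow hup
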